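/- There exists a graph G and a proper set of tree orders Π on the subtrees of G that is not induced by any partial order ≺ on the path set A_G satisfying conditions (i) and (ii). Concretely: let G have vertices 0,1,2,3,4 with single edges (1,0), (2,0), two parallel edges e_1,e_2 from 3 to 1, and two parallel edges f_1,f_2 from 4 to 2; assigning to the spanning tree T_{ij} (containing e_i and f_j) the order with 3 before 4 when i ≠ j and 4 before 3 when i = j gives a proper set of tree orders not of the form π_≺. -/

import Mathlib

open Finset

open scoped Classical

/-- A subtree of the digraph (with multiplicity function `E`) on vertices
`{0,...,n}`, rooted at `0`: every non-root vertex of the subtree has a unique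
outgoing edge (its parent together with the index of a parallel edge), and
iterating parents reaches the root. -/
structure Subtree (n : ℕ) (E : Fin (n+1) → Fin (n+1) → ℕ) where
  par : Fin (n+1) → Option (Fin (n+1) × ℕ)
  root_par : par 0 = none
  edge_valid : ∀ v p k, par v = some (p, k) → k < E v p
  parent_mem : ∀ v p k, par v = some (p, k) → p = 0 ∨ (par p).isSome
  reaches : ∀ v, (par v).isSome →
    Relation.ReflTransGen (fun a c => ∃ k, par a = some (c, k)) v 0

noncomputable def Subtree.verts {n : ℕ} {E : Fin (n+1) → Fin (n+1) → ℕ}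
    (t : Subtree n E) : Finset (Fin (n+1)) :=
  Finset.univ.filter (fun v => v = 0 ∨ (t.par v).isSome)

def Subtree.IsSubtreeOf {n : ℕ} {E : Fin (n+1) → Fin (n+1) → ℕ}
    (t T : Subtree n E) : Prop :=
  ∀ v, (t.par v).isSome → t.par v = T.par v

def Subtree.IsSpanning {n : ℕ} {E : Fin (n+1) → Fin (n+1) → ℕ}
    (T : Subtree n E) : Prop :=
  ∀ v, v ∈ T.verts

/-- `b` is a `G`-parking function: for every non-empty set `U` of non-root
vertices there is `j ∈ U` with more than `b j` edges from `j` to the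
complement of `U`. (The value `b 0` at the root is irrelevant.) -/
def IsParking {n : ℕ} (E : Fin (n+1) → Fin (n+1) → ℕ) (b : Fin (n+1) → ℕ) : Prop :=
  ∀ U : Finset (Fin (n+1)), U.Nonempty → 0 ∉ U → ∃ j ∈ U, b j < ∑ i ∈ Uᶜ, E j i

/-- An assignment of a relation on vertices to every rooted subtree. -/
structure TreeOrders (n : ℕ) (E : Fin (n+1) → Fin (n+1) → ℕ) where
  lt : Subtree n E → Fin (n+1) → Fin (n+1) → Prop

/-- A proper set of tree orders: each `lt T` is a strict total order on the
vertices of `T`, parents are smaller than children, and the orders are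
consistent under restriction to rooted subtrees. -/
def TreeOrders.Proper {n : ℕ} {E : Fin (n+1) → Fin (n+1) → ℕ}
    (P : TreeOrders n E) : Prop :=
  (∀ T : Subtree n E, ∀ i ∈ T.verts, ¬ P.lt T i i) ∧
  (∀ T : Subtree n E, ∀ i ∈ T.verts, ∀ j ∈ T.verts, ∀ l ∈ T.verts,
     P.lt T i j → P.lt T j l → P.lt T i l) ∧
  (∀ T : Subtree n E, ∀ i ∈ T.verts, ∀ j ∈ T.verts, i ≠ j → P.lt T i j ∨ P.lt T j i) ∧
  (∀ T : Subtree n E, ∀ j q k, T.par j = some (q, k) → P.lt T q j) ∧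
  (∀ t T : Subtree n E, t.IsSubtreeOf T →
     ∀ i ∈ t.verts, ∀ j ∈ t.verts, (P.lt t i j ↔ P.lt T i j))

/-- The graph on vertices `{0,1,2,3,4}` with single edges `(1,0)`, `(2,0)`,
two parallel edges from `3` to `1`, and two parallel edges from `4` to `2`. -/
def E12 : Fin 5 → Fin 5 → ℕ := fun v w =>
  if (v, w) = (1, 0) ∨ (v, w) = (2, 0) then 1
  else if (v, w) = (3, 1) ∨ (v, w) = (4, 2) then 2
  else 0

/-- An edge-annotated root-path of the multigraph `E12`: a list of pairs
`(vertex, parallel-edge index)` forming a directed path to the root `0` with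
distinct non-root vertices and valid edge indices. -/
def IsEPath (L : List (Fin 5 × ℕ)) : Prop :=
  ((0 : Fin 5) :: L.map Prod.fst).Nodup ∧
    List.Chain' (fun a c : Fin 5 × ℕ => c.2 < E12 c.1 a.1)
      (((0 : Fin 5), 0) :: L)

def sameK (T : Subtree 4 E12) : Prop :=
  ∃ k, T.par 3 = some (1, k) ∧ T.par 4 = some (2, k)

noncomputable def rk (T : Subtree 4 E12) : Fin 5 → ℕ := fun v =>
  if v = 3 then (if sameK T then 4 else 3)
  else if v = 4 then (if sameK T then 3 else 4)
  else v.val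

lemma edge_cases (T : Subtree 4 E12) {v p : Fin 5} {k : ℕ} (h : T.par v = some (p, k)) :
    (v = 1 ∧ p = 0 ∧ k = 0) ∨ (v = 2 ∧ p = 0 ∧ k = 0) ∨
      (v = 3 ∧ p = 1 ∧ k < 2) ∨ (v = 4 ∧ p = 2 ∧ k < 2) := by
  have hk := T.edge_valid v p k h
  have h0 : v ≠ 0 := by rintro rfl; simp [T.root_par] at h
  fin_cases v <;> fin_cases p <;> simp_all [E12, Prod.ext_iff]

lemma rk_val (T : Subtree 4 E12) (v : Fin 5) (h3 : v ≠ 3) (h4 : v ≠ 4) :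
    rk T v = v.val := by simp [rk, h3, h4]

lemma val_le (v : Fin 5) (h3 : v ≠ 3) (h4 : v ≠ 4) : v.val ≤ 2 := by
  fin_cases v <;> simp_all

lemma rk_34 (T : Subtree 4 E12) (v : Fin 5) (h : v = 3 ∨ v = 4) :
    3 ≤ rk T v ∧ rk T v ≤ 4 := by
  rcases h with rfl | rfl <;> simp [rk] <;> split_ifs <;> omega

lemma rk_lt_iff (t T : Subtree 4 E12) (i j : Fin 5)
    (h1 : ¬(i = 3 ∧ j = 4)) (h2 : ¬(i = 4 ∧ j = 3)) :
    (rk t i < rk t j ↔ rk T i < rk T j) := by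
  by_cases hi : i = 3 ∨ i = 4 <;> by_cases hj : j = 3 ∨ j = 4
  · have hij : i = j := by rcases hi with rfl|rfl <;> rcases hj with rfl|rfl <;> tauto
    subst hij; simp
  · push_neg at hj
    have := rk_34 t i hi; have := rk_34 T i hi
    have := rk_val t j hj.1 hj.2; have := rk_val T j hj.1 hj.2
    have := val_le j hj.1 hj.2
    omega
  · push_neg at hi
    have := rk_34 t j hj; have := rk_34 T j hj
    have := rk_val t i hi.1 hi.2; have := rk_val T i hi.1 hi.2
    have := val_le i hi.1 hi.2
    omega
  · push_neg at hi; push_neg at hj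
    rw [rk_val t i hi.1 hi.2, rk_val t j hj.1 hj.2,
        rk_val T i hi.1 hi.2, rk_val T j hj.1 hj.2]

lemma mem_verts {t : Subtree 4 E12} {v : Fin 5} :
    v ∈ t.verts ↔ v = 0 ∨ (t.par v).isSome := by
  simp [Subtree.verts]
def Tpar (i j : Fin 2) : Fin 5 → Option (Fin 5 × ℕ) := fun v =>
  if v = 1 ∨ v = 2 then some (0, 0)
  else if v = 3 then some (1, (i : ℕ))
  else if v = 4 then some (2, (j : ℕ))
  else none

def Tij (i j : Fin 2) : Subtree 4 E12 where
  par := Tpar i j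
  root_par := by simp [Tpar]
  edge_valid := by
    intro v p k h
    fin_cases v <;> simp [Tpar] at h <;> obtain ⟨rfl, rfl⟩ := h
    · simp [E12]
    · simp [E12]
    · simpa [E12] using i.isLt
    · simpa [E12] using j.isLt
  parent_mem := by
    intro v p k h
    fin_cases v <;> simp_all [Tpar, Prod.ext_iff]
  reaches := by
    intro v hv
    fin_cases v
    · simp [Tpar] at hv
    · exact Relation.ReflTransGen.single ⟨0, by simp [Tpar]⟩
    · exact Relation.ReflTransGen.single ⟨0, by simp [Tpar]⟩
    · exact Relation.ReflTransGen.head (b := 1) ⟨(i : ℕ), by simp [Tpar]⟩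
        (Relation.ReflTransGen.single ⟨0, by simp [Tpar]⟩)
    · exact Relation.ReflTransGen.head (b := 2) ⟨(j : ℕ), by simp [Tpar]⟩
        (Relation.ReflTransGen.single ⟨0, by simp [Tpar]⟩)

lemma Tij_spanning (i j : Fin 2) : (Tij i j).IsSpanning := by
  intro v
  rw [mem_verts]
  fin_cases v <;> simp [Tij, Tpar]

lemma sameK_Tij (i j : Fin 2) : sameK (Tij i j) ↔ i = j := by
  constructor
  · rintro ⟨k, h3, h4⟩
    simp [Tij, Tpar, Prod.ext_iff] at h3 h4
    exact Fin.ext (h3 ▸ h4).symm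
  · rintro rfl
    exact ⟨(i : ℕ), by simp [Tij, Tpar], by simp [Tij, Tpar]⟩

def Aij (i j : Fin 2) : Fin 5 → List (Fin 5 × ℕ) := fun v =>
  if v = 1 then [(1, 0)]
  else if v = 2 then [(2, 0)]
  else if v = 3 then [(1, 0), (3, (i : ℕ))]
  else if v = 4 then [(2, 0), (4, (j : ℕ))]
  else []

lemma Aij_compat (i j : Fin 2) :
    Aij i j 0 = [] ∧
      ∀ v q k, (Tij i j).par v = some (q, k) → Aij i j v = Aij i j q ++ [(v, k)] := by
  refine ⟨by simp [Aij], ?_⟩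
  intro v q k h
  fin_cases v <;> simp_all [Tij, Tpar, Aij, Prod.ext_iff] <;>
    simp [← h.1, ← h.2, Aij]

lemma epath_e (i : Fin 2) : IsEPath [((1 : Fin 5), 0), (3, (i : ℕ))] := by
  refine ⟨by simp, by simp [List.Chain', List.isChain_cons_cons, E12]; omega⟩

lemma epath_f (j : Fin 2) : IsEPath [((2 : Fin 5), 0), (4, (j : ℕ))] := by
  refine ⟨by simp, by simp [List.Chain', List.isChain_cons_cons, E12]; omega⟩
lemma sameK_of_pars {T : Subtree 4 E12} {k3 k4 : ℕ}
    (h3 : T.par 3 = some (1, k3)) (h4 : T.par 4 = some (2, k4)) :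
    sameK T ↔ k3 = k4 := by
  constructor
  · rintro ⟨k, hk3, hk4⟩
    rw [h3] at hk3; rw [h4] at hk4
    simp [Prod.ext_iff] at hk3 hk4
    omega
  · rintro rfl; exact ⟨k3, h3, h4⟩


/-- There is a proper set of tree orders on the subtrees of `E12` which on
each spanning tree `T_{ij}` (using the `i`-th edge from `3` and `j`-th edge
from `4`) orders `0 < 1 < 2` and puts `3` before `4` exactly when `i ≠ j`,
and which is not induced by any partial order `prec` on the root-paths
satisfying: comparability of paths with path intersection, and initial
segments are smaller. -/
theorem stmt_12 :
    ∃ P : TreeOrders 4 E12, P.Proper ∧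
      (∀ T : Subtree 4 E12, T.IsSpanning → ∀ p3 k3 p4 k4,
        T.par 3 = some (p3, k3) → T.par 4 = some (p4, k4) →
        (P.lt T 0 1 ∧ P.lt T 1 2 ∧ P.lt T 2 3 ∧ P.lt T 2 4 ∧
          (P.lt T 3 4 ↔ k3 ≠ k4))) ∧
      ¬ ∃ prec : List (Fin 5 × ℕ) → List (Fin 5 × ℕ) → Prop,
        (∀ L, IsEPath L → ¬ prec L L) ∧
        (∀ L L' L'', IsEPath L → IsEPath L' → IsEPath L'' →
          prec L L' → prec L' L'' → prec L L'') ∧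
        (∀ L L', IsEPath L → IsEPath L' →
          (∃ M, IsEPath M ∧ ∀ x, x ∈ M ↔ (x ∈ L ∧ x ∈ L')) →
          L = L' ∨ prec L L' ∨ prec L' L) ∧
        (∀ L L', IsEPath L → L' <+: L → L' ≠ L → prec L' L) ∧
        (∀ (T : Subtree 4 E12) (A : Fin 5 → List (Fin 5 × ℕ)),
          (A 0 = [] ∧ ∀ v q k, T.par v = some (q, k) → A v = A q ++ [(v, k)]) →
          ∀ i ∈ T.verts, ∀ j ∈ T.verts, (P.lt T i j ↔ prec (A i) (A j))) := by
  refine ⟨⟨fun T i j => rk T i < rk T j⟩, ⟨?_, ?_, ?_, ?_, ?_⟩, ?_, ?_⟩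
  · intro T i _ h; exact lt_irrefl _ h
  · intro T i _ j _ l _ h1 h2; exact lt_trans h1 h2
  · -- totality
    intro T i _ j _ hij
    rcases lt_trichotomy (rk T i) (rk T j) with h | h | h
    · exact Or.inl h
    · exfalso
      by_cases hi : i = 3 ∨ i = 4 <;> by_cases hj : j = 3 ∨ j = 4
      · rcases hi with rfl | rfl <;> rcases hj with rfl | rfl <;> try exact hij rfl
        · simp only [rk] at h; split_ifs at h <;> simp_all
        · simp only [rk] at h; split_ifs at h <;> simp_all
      · push_neg at hj
        have := rk_34 T i hi
        rw [rk_val T j hj.1 hj.2] at h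
        have := val_le j hj.1 hj.2
        omega
      · push_neg at hi
        have := rk_34 T j hj
        rw [rk_val T i hi.1 hi.2] at h
        have := val_le i hi.1 hi.2
        omega
      · push_neg at hi; push_neg at hj
        rw [rk_val T i hi.1 hi.2, rk_val T j hj.1 hj.2] at h
        exact hij (Fin.ext h)
    · exact Or.inr h
  · -- parent smaller
    intro T j q k h
    rcases edge_cases T h with ⟨rfl, rfl, -⟩ | ⟨rfl, rfl, -⟩ | ⟨rfl, rfl, -⟩ | ⟨rfl, rfl, -⟩
    · simp [rk]
    · simp [rk]
    · have := rk_34 T 3 (Or.inl rfl)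
      show rk T 1 < rk T 3
      rw [rk_val T 1 (by decide) (by decide)]
      omega
    · have := rk_34 T 4 (Or.inr rfl)
      show rk T 2 < rk T 4
      rw [rk_val T 2 (by decide) (by decide)]
      omega
  · -- restriction
    intro t T hsub i hi j hj
    by_cases h34 : (3 : Fin 5) ∈ t.verts ∧ (4 : Fin 5) ∈ t.verts
    · have e3 : t.par 3 = T.par 3 := by
        apply hsub
        rcases mem_verts.mp h34.1 with h | h
        · exact absurd h (by decide)
        · exact h
      have e4 : t.par 4 = T.par 4 := by
        apply hsub
        rcases mem_verts.mp h34.2 with h | h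
        · exact absurd h (by decide)
        · exact h
      have hs : sameK t ↔ sameK T := by unfold sameK; rw [e3, e4]
      have hr : ∀ v, rk t v = rk T v := by
        intro v; simp only [rk]
        by_cases hsk : sameK t
        · simp [hsk, hs.mp hsk]
        · simp [hsk, hs.not.mp hsk]
      show rk t i < rk t j ↔ rk T i < rk T j
      rw [hr i, hr j]
    · show rk t i < rk t j ↔ rk T i < rk T j
      apply rk_lt_iff
      · rintro ⟨rfl, rfl⟩; exact h34 ⟨hi, hj⟩
      · rintro ⟨rfl, rfl⟩; exact h34 ⟨hj, hi⟩
  · -- spanning trees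
    intro T _ p3 k3 p4 k4 h3 h4
    obtain ⟨-, rfl, hk3⟩ : (3 : Fin 5) = 3 ∧ p3 = 1 ∧ k3 < 2 := by
      rcases edge_cases T h3 with h | h | h | h <;> simp_all
    obtain ⟨-, rfl, hk4⟩ : (4 : Fin 5) = 4 ∧ p4 = 2 ∧ k4 < 2 := by
      rcases edge_cases T h4 with h | h | h | h <;> simp_all
    have hsk := sameK_of_pars h3 h4
    have r0 : rk T 0 = 0 := rk_val T 0 (by decide) (by decide)
    have r1 : rk T 1 = 1 := rk_val T 1 (by decide) (by decide)
    have r2 : rk T 2 = 2 := rk_val T 2 (by decide) (by decide)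
    refine ⟨by simp [r0, r1], by simp [r1, r2], ?_, ?_, ?_⟩
    · have := rk_34 T 3 (Or.inl rfl); simp only [r2]; omega
    · have := rk_34 T 4 (Or.inr rfl); simp only [r2]; omega
    · by_cases h : sameK T
      · simp only [rk, if_pos rfl, if_neg (by decide : ¬(4:Fin 5) = 3), if_pos rfl, h,
          if_true]
        simp [hsk.mp h]
      · simp only [rk, if_pos rfl, if_neg (by decide : ¬(4:Fin 5) = 3), if_pos rfl, h,
          if_false]
        simp [hsk.not.mp h]
  · -- no such prec
    rintro ⟨prec, hirr, htrans, -, -, hind⟩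
    have hrk : ∀ i j : Fin 2, (rk (Tij i j) 3 < rk (Tij i j) 4 ↔ i ≠ j) ∧
        (rk (Tij i j) 4 < rk (Tij i j) 3 ↔ i = j) := by
      intro i j
      by_cases h : sameK (Tij i j)
      · simp only [rk, if_pos rfl, if_neg (by decide : ¬(4:Fin 5) = 3), if_pos rfl, h,
          if_true]
        simp [(sameK_Tij i j).mp h]
      · simp only [rk, if_pos rfl, if_neg (by decide : ¬(4:Fin 5) = 3), if_pos rfl, h,
          if_false]
        have := (sameK_Tij i j).not.mp h
        simp [this]
    have m3 : ∀ i j : Fin 2, (3 : Fin 5) ∈ (Tij i j).verts := fun i j => Tij_spanning i j 3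
    have m4 : ∀ i j : Fin 2, (4 : Fin 5) ∈ (Tij i j).verts := fun i j => Tij_spanning i j 4
    have A3 : ∀ i j : Fin 2, Aij i j 3 = [((1:Fin 5), 0), (3, (i : ℕ))] := by
      intro i j; simp [Aij]
    have A4 : ∀ i j : Fin 2, Aij i j 4 = [((2:Fin 5), 0), (4, (j : ℕ))] := by
      intro i j; simp [Aij]
    have hef : ∀ i j : Fin 2, i ≠ j →
        prec [((1:Fin 5), 0), (3, (i : ℕ))] [((2:Fin 5), 0), (4, (j : ℕ))] := by
      intro i j hij
      have := (hind (Tij i j) (Aij i j) (Aij_compat i j) 3 (m3 i j) 4 (m4 i j)).mp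
        ((hrk i j).1.mpr hij)
      rwa [A3, A4] at this
    have hfe : ∀ i : Fin 2,
        prec [((2:Fin 5), 0), (4, (i : ℕ))] [((1:Fin 5), 0), (3, (i : ℕ))] := by
      intro i
      have := (hind (Tij i i) (Aij i i) (Aij_compat i i) 4 (m4 i i) 3 (m3 i i)).mp
        ((hrk i i).2.mpr rfl)
      rwa [A3, A4] at this
    have p1 : prec [((1:Fin 5), 0), (3, ((0 : Fin 2) : ℕ))] [((1:Fin 5), 0), (3, ((1 : Fin 2) : ℕ))] :=
      htrans _ _ _ (epath_e 0) (epath_f 1) (epath_e 1) (hef 0 1 (by decide)) (hfe 1)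
    have p2 : prec [((1:Fin 5), 0), (3, ((1 : Fin 2) : ℕ))] [((1:Fin 5), 0), (3, ((0 : Fin 2) : ℕ))] :=
      htrans _ _ _ (epath_e 1) (epath_f 0) (epath_e 0) (hef 1 0 (by decide)) (hfe 0)
    exact hirr _ (epath_e 0) (htrans _ _ _ (epath_e 0) (epath_e 1) (epath_e 0) p1 p2)
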